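/- Consistency of the second-order central difference for functions with Hölder continuous second derivative (estimate for the residual r² in Proposition 5.1). Let α ∈ (0,1], L ≥ 0, h > 0 and x ∈ ℝ. Let u : ℝ → ℝ be twice differentiable on the interval [x−h, x+h] with |u''(σ) − u''(τ)| ≤ L|σ−τ|^α for all σ, τ ∈ [x−h, x+h]. Then |u''(x) − (u(x+h) − 2u(x) + u(x−h))/h²| ≤ L·h^α. -/

import Mathlib

open Set


/-- Consistency of the second-order central difference for functions with Hölder
continuous second derivative (estimate for the residual `r²` in Proposition 5.1):
`|u''(x) − (u(x+h) − 2u(x) + u(x−h))/h²| ≤ L·h^α`. -/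
theorem central_difference_consistency_holder
    (α L h x : ℝ) (hα : α ∈ Set.Ioc (0:ℝ) 1) (hL : 0 ≤ L) (hh : 0 < h)
    (u u' u'' : ℝ → ℝ)
    (hd1 : ∀ σ ∈ Set.Icc (x - h) (x + h),
      HasDerivWithinAt u (u' σ) (Set.Icc (x - h) (x + h)) σ)
    (hd2 : ∀ σ ∈ Set.Icc (x - h) (x + h),
      HasDerivWithinAt u' (u'' σ) (Set.Icc (x - h) (x + h)) σ)
    (hHolder : ∀ σ ∈ Set.Icc (x - h) (x + h), ∀ τ ∈ Set.Icc (x - h) (x + h),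
      |u'' σ - u'' τ| ≤ L * |σ - τ| ^ α) :
    |u'' x - (u (x + h) - 2 * u x + u (x - h)) / h ^ 2| ≤ L * h ^ α := by
  obtain ⟨hα0, hα1⟩ := hα
  have hIp : ∀ t ∈ Icc (0:ℝ) h, x + t ∈ Icc (x - h) (x + h) := by
    rintro t ⟨h1, h2⟩; constructor <;> linarith
  have hIm : ∀ t ∈ Icc (0:ℝ) h, x - t ∈ Icc (x - h) (x + h) := by
    rintro t ⟨h1, h2⟩; constructor <;> linarith
  set F : ℝ → ℝ := fun t => u (x + t) + u (x - t) - 2 * u x - t ^ 2 * u'' x with hF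
  set G : ℝ → ℝ := fun t => u' (x + t) - u' (x - t) - 2 * t * u'' x with hG
  set G' : ℝ → ℝ := fun t => u'' (x + t) + u'' (x - t) - 2 * u'' x with hG'
  have hplus : ∀ t ∈ Icc (0:ℝ) h, HasDerivWithinAt (fun s : ℝ => x + s) 1 (Icc (0:ℝ) h) t :=
    fun t _ => ((hasDerivAt_id t).const_add x).hasDerivWithinAt
  have hminus : ∀ t ∈ Icc (0:ℝ) h, HasDerivWithinAt (fun s : ℝ => x - s) (-1) (Icc (0:ℝ) h) t :=
    fun t _ => ((hasDerivAt_id t).const_sub x).hasDerivWithinAt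
  have hDF : ∀ t ∈ Icc (0:ℝ) h, HasDerivWithinAt F (G t) (Icc 0 h) t := by
    intro t ht
    have h1 : HasDerivWithinAt (fun s => u (x + s)) (u' (x + t) * 1) (Icc 0 h) t :=
      (hd1 _ (hIp t ht)).comp t (hplus t ht) (fun s hs => hIp s hs)
    have h2 : HasDerivWithinAt (fun s => u (x - s)) (u' (x - t) * (-1)) (Icc 0 h) t :=
      (hd1 _ (hIm t ht)).comp t (hminus t ht) (fun s hs => hIm s hs)
    have h3 : HasDerivWithinAt (fun s : ℝ => s ^ 2 * u'' x) (2 * t * u'' x) (Icc 0 h) t := by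
      have := ((hasDerivAt_pow 2 t).mul_const (u'' x)).hasDerivWithinAt (s := Icc (0:ℝ) h)
      refine this.congr_deriv ?_; push_cast; ring
    have h4 := ((h1.add h2).sub_const (2 * u x)).sub h3
    refine h4.congr_deriv ?_
    simp only [hG]; ring
  have hDG : ∀ t ∈ Icc (0:ℝ) h, HasDerivWithinAt G (G' t) (Icc 0 h) t := by
    intro t ht
    have h1 : HasDerivWithinAt (fun s => u' (x + s)) (u'' (x + t) * 1) (Icc 0 h) t :=
      (hd2 _ (hIp t ht)).comp t (hplus t ht) (fun s hs => hIp s hs)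
    have h2 : HasDerivWithinAt (fun s => u' (x - s)) (u'' (x - t) * (-1)) (Icc 0 h) t :=
      (hd2 _ (hIm t ht)).comp t (hminus t ht) (fun s hs => hIm s hs)
    have h3 : HasDerivWithinAt (fun s : ℝ => 2 * s * u'' x) (2 * u'' x) (Icc 0 h) t := by
      have := ((hasDerivAt_id t).const_mul 2).mul_const (u'' x)
      have := this.hasDerivWithinAt (s := Icc (0:ℝ) h)
      refine this.congr_deriv ?_; ring
    have h4 := (h1.sub h2).sub h3
    refine h4.congr_deriv ?_
    simp only [hG']; ring
  have toIci : ∀ {g g' : ℝ → ℝ}, (∀ t ∈ Icc (0:ℝ) h, HasDerivWithinAt g (g' t) (Icc 0 h) t) →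
      ∀ t ∈ Ico (0:ℝ) h, HasDerivWithinAt g (g' t) (Ici t) t := by
    intro g g' hg t ht
    refine (hg t ⟨ht.1, ht.2.le⟩).mono_of_mem_nhdsWithin ?_
    have h1 : Iic h ∈ nhdsWithin t (Ici t) := nhdsWithin_le_nhds (Iic_mem_nhds ht.2)
    filter_upwards [h1, self_mem_nhdsWithin] with s hs1 hs2
    exact ⟨le_trans ht.1 hs2, hs1⟩
  have h1α : (0:ℝ) < 1 + α := by linarith
  have h2α : (0:ℝ) < 2 + α := by linarith
  -- boundary function derivatives
  have hB1 : ∀ t : ℝ, HasDerivAt (fun s : ℝ => 2 * L / (1 + α) * s ^ (1 + α)) (2 * L * t ^ α) t := by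
    intro t
    have := (Real.hasDerivAt_rpow_const (x := t) (p := 1 + α) (Or.inr (by linarith))).const_mul
      (2 * L / (1 + α))
    refine this.congr_deriv ?_
    rw [show 1 + α - 1 = α by ring]
    field_simp
  have hB2 : ∀ t : ℝ, HasDerivAt (fun s : ℝ => 2 * L / ((1 + α) * (2 + α)) * s ^ (2 + α))
      (2 * L / (1 + α) * t ^ (1 + α)) t := by
    intro t
    have := (Real.hasDerivAt_rpow_const (x := t) (p := 2 + α) (Or.inr (by linarith))).const_mul
      (2 * L / ((1 + α) * (2 + α)))
    refine this.congr_deriv ?_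
    rw [show 2 + α - 1 = 1 + α by ring]
    field_simp
  -- step 1 : bound G
  have key1 : ∀ t ∈ Icc (0:ℝ) h, ‖G t‖ ≤ 2 * L / (1 + α) * t ^ (1 + α) := by
    have ha : ‖G 0‖ ≤ 2 * L / (1 + α) * (0:ℝ) ^ (1 + α) := by
      simp [hG, Real.zero_rpow (ne_of_gt h1α)]
    have bound : ∀ t ∈ Ico (0:ℝ) h, ‖G' t‖ ≤ 2 * L * t ^ α := by
      intro t ht
      have hp := hHolder (x + t) (hIp t ⟨ht.1, ht.2.le⟩) x (Set.mem_Icc.mpr ⟨by linarith, by linarith⟩)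
      have hm := hHolder (x - t) (hIm t ⟨ht.1, ht.2.le⟩) x (Set.mem_Icc.mpr ⟨by linarith, by linarith⟩)
      have hxt : |x + t - x| = t := by rw [show x + t - x = t by ring, abs_of_nonneg ht.1]
      have hxm : |x - t - x| = t := by rw [show x - t - x = -t by ring, abs_neg, abs_of_nonneg ht.1]
      rw [hxt] at hp; rw [hxm] at hm
      have : |G' t| ≤ |u'' (x + t) - u'' x| + |u'' (x - t) - u'' x| := by
        simp only [hG']
        calc |u'' (x + t) + u'' (x - t) - 2 * u'' x|
            = |(u'' (x + t) - u'' x) + (u'' (x - t) - u'' x)| := by ring_nf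
          _ ≤ _ := abs_add_le _ _
      calc ‖G' t‖ = |G' t| := rfl
        _ ≤ _ := this
        _ ≤ L * t ^ α + L * t ^ α := add_le_add hp hm
        _ = 2 * L * t ^ α := by ring
    exact fun t ht => image_norm_le_of_norm_deriv_right_le_deriv_boundary
      (fun t ht => (hDG t ht).continuousWithinAt) (toIci hDG) ha hB1 bound ht
  -- step 2 : bound F
  have key2 : ‖F h‖ ≤ 2 * L / ((1 + α) * (2 + α)) * h ^ (2 + α) := by
    have ha : ‖F 0‖ ≤ 2 * L / ((1 + α) * (2 + α)) * (0:ℝ) ^ (2 + α) := by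
      norm_num [hF, Real.zero_rpow (ne_of_gt h2α)]
      ring
    have bound : ∀ t ∈ Ico (0:ℝ) h, ‖G t‖ ≤ 2 * L / (1 + α) * t ^ (1 + α) :=
      fun t ht => key1 t ⟨ht.1, ht.2.le⟩
    exact image_norm_le_of_norm_deriv_right_le_deriv_boundary
      (fun t ht => (hDF t ht).continuousWithinAt) (toIci hDF) ha hB2 bound
      (right_mem_Icc.2 hh.le)
  -- conclusion
  have hsplit : h ^ (2 + α) = h ^ 2 * h ^ α := by
    rw [Real.rpow_add hh]
    congr 1
    rw [← Real.rpow_natCast h 2]; norm_num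
  have hfh : u'' x - (u (x + h) - 2 * u x + u (x - h)) / h ^ 2 = -(F h) / h ^ 2 := by
    field_simp [hF]; ring
  rw [hfh, abs_div, abs_neg, abs_of_pos (pow_pos hh 2), div_le_iff₀ (pow_pos hh 2)]
  have hα2 : (2:ℝ) ≤ (1 + α) * (2 + α) := by nlinarith
  have hrp : (0:ℝ) ≤ h ^ α := (Real.rpow_pos_of_pos hh α).le
  have hc : 2 * L / ((1 + α) * (2 + α)) ≤ L := by
    rw [div_le_iff₀ (by positivity)]
    nlinarith
  calc |F h| = ‖F h‖ := rfl
    _ ≤ 2 * L / ((1 + α) * (2 + α)) * h ^ (2 + α) := key2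
    _ = 2 * L / ((1 + α) * (2 + α)) * (h ^ 2 * h ^ α) := by rw [hsplit]
    _ ≤ L * (h ^ 2 * h ^ α) := by
        apply mul_le_mul_of_nonneg_right hc (by positivity)
    _ = L * h ^ α * h ^ 2 := by ring
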